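/- Let φ, θ₀₀, θ₁₁, α₁, α₂, γ ∈ ℝ, let a ≥ 0 be real and b ∈ ℂ with a² + |b|² = 1, define V := [[a, b], [−conj(b), a]] and U := e^{iα₁σ_z} e^{iγσ_y} e^{iα₂σ_z}, and let F be the operator on ℂ² ⊗ ℂ² diagonal in the computational basis with diagonal (e^{iθ₀₀}, 1, 1, e^{iθ₁₁}). Suppose (V ⊗ V) F = C_φ (U ⊗ U) C_φ and sin φ ≠ 0. Then a² = cos²γ, and moreover either a = 0 or cos δ = s cos χ, where δ := (θ₀₀ − θ₁₁)/2, χ := 2(α₁ + α₂) − φ, and s ∈ {+1, −1} is such that e^{i(θ₀₀+θ₁₁)/2} = s e^{iφ}. -/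

import Mathlib

open Kronecker Matrix

noncomputable section

/-- The Pauli matrix σ_y. -/
def sigmaY : Matrix (Fin 2) (Fin 2) ℂ := !![0, -Complex.I; Complex.I, 0]

/-- The Pauli matrix σ_z. -/
def sigmaZ : Matrix (Fin 2) (Fin 2) ℂ := !![1, 0; 0, -1]

lemma diag2 (x y : ℂ) : Matrix.diagonal ![x, y] = !![x, 0; 0, y] := by
  ext i j
  fin_cases i <;> fin_cases j <;> simp [Matrix.diagonal]

lemma expZ (c : ℂ) : NormedSpace.exp (c • sigmaZ) =
    !![Complex.exp c, 0; 0, Complex.exp (-c)] := by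
  have hd : c • sigmaZ = Matrix.diagonal ![c, -c] := by
    rw [diag2]
    ext i j
    fin_cases i <;> fin_cases j <;> simp [sigmaZ]
  rw [hd, Matrix.exp_diagonal, Pi.exp_def]
  rw [show (fun i => NormedSpace.exp (![c, -c] i)) = ![Complex.exp c, Complex.exp (-c)] by
    funext i; fin_cases i <;> simp [← Complex.exp_eq_exp_ℂ], diag2]

lemma expY (γ : ℝ) : NormedSpace.exp ((Complex.I * (γ : ℂ)) • sigmaY) =
    !![(Complex.cos γ : ℂ), Complex.sin γ; -Complex.sin γ, Complex.cos γ] := by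
  set P : Matrix (Fin 2) (Fin 2) ℂ := !![1, 1; Complex.I, -Complex.I] with hP
  set Q : Matrix (Fin 2) (Fin 2) ℂ := !![1/2, -Complex.I/2; 1/2, Complex.I/2] with hQ
  have hPQ : P * Q = 1 := by
    ext i j
    fin_cases i <;> fin_cases j <;>
      simp [hP, hQ, Matrix.mul_apply, Fin.sum_univ_two, Matrix.one_apply] <;>
      ring_nf <;> simp [Complex.I_sq] <;> ring
  have hPinv : P⁻¹ = Q := Matrix.inv_eq_right_inv hPQ
  have hPU : IsUnit P := by
    rw [Matrix.isUnit_iff_isUnit_det]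
    have : P.det = -(2 * Complex.I) := by simp [hP, Matrix.det_fin_two_of]; ring
    rw [this]
    simp [isUnit_iff_ne_zero, Complex.I_ne_zero]
  have hD : (Complex.I * (γ : ℂ)) • sigmaY
      = P * Matrix.diagonal ![Complex.I * γ, -(Complex.I * γ)] * P⁻¹ := by
    rw [hPinv, diag2]
    ext i j
    fin_cases i <;> fin_cases j <;>
      simp [hP, hQ, sigmaY, Matrix.mul_apply, Fin.sum_univ_two] <;>
      ring_nf <;> simp [Complex.I_sq] <;> ring
  rw [hD, Matrix.exp_conj P _ hPU, Matrix.exp_diagonal, hPinv, Pi.exp_def]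
  rw [show (fun i => NormedSpace.exp (![Complex.I * γ, -(Complex.I * γ)] i))
      = ![Complex.exp (Complex.I * γ), Complex.exp (-(Complex.I * γ))] by
    funext i; fin_cases i <;> simp [← Complex.exp_eq_exp_ℂ], diag2]
  ext i j
  fin_cases i <;> fin_cases j <;>
    simp [hP, hQ, Matrix.mul_apply, Fin.sum_univ_two, Complex.cos, Complex.sin] <;>
    ring_nf <;> simp [Complex.I_sq] <;> ring_nf

/-- The controlled-phase gate `C_φ` on `ℂ² ⊗ ℂ²`:
`C_φ (|a⟩⊗|b⟩) = e^{iφab} |a⟩⊗|b⟩`. -/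
def Cphase (φ : ℝ) : Matrix (Fin 2 × Fin 2) (Fin 2 × Fin 2) ℂ :=
  Matrix.diagonal fun p => Complex.exp (Complex.I * (φ : ℂ) * (p.1.val : ℂ) * (p.2.val : ℂ))

/-- refinement of the trace/determinant constraints for `sin φ ≠ 0`:
`a² = cos²γ`, and either `a = 0` or `cos δ = s cos χ`. -/
theorem statement13 (φ θ00 θ11 α₁ α₂ γ : ℝ) (a : ℝ) (ha : 0 ≤ a) (b : ℂ)
    (hab : a ^ 2 + ‖b‖ ^ 2 = 1)
    (V : Matrix (Fin 2) (Fin 2) ℂ) (hV : V = !![(a : ℂ), b; -(starRingEnd ℂ) b, (a : ℂ)])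
    (U : Matrix (Fin 2) (Fin 2) ℂ)
    (hU : U = NormedSpace.exp ((Complex.I * (α₁ : ℂ)) • sigmaZ) *
              NormedSpace.exp ((Complex.I * (γ : ℂ)) • sigmaY) *
              NormedSpace.exp ((Complex.I * (α₂ : ℂ)) • sigmaZ))
    (F : Matrix (Fin 2 × Fin 2) (Fin 2 × Fin 2) ℂ)
    (hF : F = Matrix.diagonal fun p =>
      if p = ((0 : Fin 2), (0 : Fin 2)) then Complex.exp (Complex.I * (θ00 : ℂ))
      else if p = ((1 : Fin 2), (1 : Fin 2)) then Complex.exp (Complex.I * (θ11 : ℂ)) else 1)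
    (h : (V ⊗ₖ V) * F = Cphase φ * (U ⊗ₖ U) * Cphase φ)
    (hφ : Real.sin φ ≠ 0) :
    a ^ 2 = Real.cos γ ^ 2 ∧
    ∀ s : ℝ, (s = 1 ∨ s = -1) →
      Complex.exp (Complex.I * (((θ00 : ℂ) + (θ11 : ℂ)) / 2)) = (s : ℂ) * Complex.exp (Complex.I * (φ : ℂ)) →
      (a = 0 ∨ Real.cos ((θ00 - θ11) / 2) = s * Real.cos (2 * (α₁ + α₂) - φ)) := by
  have hUm : U = !![Complex.exp (Complex.I*α₁) * Complex.cos γ * Complex.exp (Complex.I*α₂),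
                    Complex.exp (Complex.I*α₁) * Complex.sin γ * Complex.exp (-(Complex.I*α₂));
                    -(Complex.exp (-(Complex.I*α₁)) * Complex.sin γ * Complex.exp (Complex.I*α₂)),
                    Complex.exp (-(Complex.I*α₁)) * Complex.cos γ * Complex.exp (-(Complex.I*α₂))] := by
    rw [hU, expZ, expY, expZ]
    ext i j
    fin_cases i <;> fin_cases j <;>
      simp [Matrix.mul_apply, Fin.sum_univ_two] <;> ring
  subst hV hF
  have key := fun p q => congrFun (congrFun h p) q
  have e1 := key (0,1) (0,1)
  have e2 := key (0,0) (0,0)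
  simp [Cphase, Matrix.mul_diagonal, Matrix.diagonal_mul, Matrix.kroneckerMap_apply, hUm] at e1 e2
  -- e1 : a * a = U00 * U11 ; e2 : a * a * exp(Iθ00) = U00 * U00
  have h1 : Complex.exp (Complex.I*α₁) * Complex.exp (-(Complex.I*α₁)) = 1 := by
    rw [← Complex.exp_add]; simp
  have h2 : Complex.exp (Complex.I*α₂) * Complex.exp (-(Complex.I*α₂)) = 1 := by
    rw [← Complex.exp_add]; simp
  have h12 : Complex.exp (Complex.I*α₁) * Complex.exp (-(Complex.I*α₁)) *
      (Complex.exp (Complex.I*α₂) * Complex.exp (-(Complex.I*α₂))) = 1 := by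
    rw [h1, h2, mul_one]
  have hc : ((a:ℂ))^2 = (Complex.cos γ)^2 := by
    linear_combination e1 + (Complex.cos (γ:ℂ))^2 * h12
  have part1 : a ^ 2 = Real.cos γ ^ 2 := by
    rw [← Complex.ofReal_cos] at hc
    exact_mod_cast hc
  refine ⟨part1, ?_⟩
  intro s hs hse
  by_cases h0 : a = 0
  · exact Or.inl h0
  right
  have ha2 : ((a:ℂ))^2 ≠ 0 := pow_ne_zero _ (by exact_mod_cast h0)
  have hE1 : Complex.exp (Complex.I*α₁) * Complex.exp (Complex.I*α₂) *
      (Complex.exp (Complex.I*α₁) * Complex.exp (Complex.I*α₂)) =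
      Complex.exp (Complex.I*(2*((α₁:ℂ)+(α₂:ℂ)))) := by
    rw [← Complex.exp_add, ← Complex.exp_add]; congr 1; ring
  have e2' : Complex.exp (Complex.I*θ00) * (a:ℂ)^2
      = Complex.exp (Complex.I*(2*((α₁:ℂ)+(α₂:ℂ)))) * (a:ℂ)^2 := by
    linear_combination e2 + Complex.cos (γ:ℂ)^2 * hE1 -
      Complex.exp (Complex.I*(2*((α₁:ℂ)+(α₂:ℂ)))) * hc
  have hθ := mul_right_cancel₀ ha2 e2'
  have hs2 : (s:ℂ) * (s:ℂ) = 1 := by rcases hs with rfl | rfl <;> norm_num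
  have hexpφ : Complex.exp (Complex.I * (φ:ℂ)) ≠ 0 := Complex.exp_ne_zero _
  have hkey : Complex.exp ((((θ00 - θ11)/2 : ℝ) : ℂ) * Complex.I)
      = (s:ℂ) * Complex.exp ((((2*(α₁+α₂) - φ : ℝ)) : ℂ) * Complex.I) := by
    have hsplit1 : Complex.exp (Complex.I*θ00)
        = Complex.exp ((((θ00 - θ11)/2 : ℝ) : ℂ) * Complex.I) *
          Complex.exp (Complex.I * (((θ00 : ℂ) + (θ11 : ℂ)) / 2)) := by
      rw [← Complex.exp_add]; congr 1; push_cast; ring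
    have hsplit2 : Complex.exp (Complex.I*(2*((α₁:ℂ)+(α₂:ℂ))))
        = Complex.exp ((((2*(α₁+α₂) - φ : ℝ)) : ℂ) * Complex.I) *
          Complex.exp (Complex.I * (φ:ℂ)) := by
      rw [← Complex.exp_add]; congr 1; push_cast; ring
    rw [hsplit1, hsplit2, hse] at hθ
    have := mul_right_cancel₀ hexpφ (by linear_combination hθ :
      Complex.exp ((((θ00 - θ11)/2 : ℝ) : ℂ) * Complex.I) * (s:ℂ) * Complex.exp (Complex.I * (φ:ℂ))
      = Complex.exp ((((2*(α₁+α₂) - φ : ℝ)) : ℂ) * Complex.I) * Complex.exp (Complex.I * (φ:ℂ)))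
    calc Complex.exp ((((θ00 - θ11)/2 : ℝ) : ℂ) * Complex.I)
        = Complex.exp ((((θ00 - θ11)/2 : ℝ) : ℂ) * Complex.I) * ((s:ℂ) * (s:ℂ)) := by
          rw [hs2, mul_one]
      _ = (s:ℂ) * (Complex.exp ((((θ00 - θ11)/2 : ℝ) : ℂ) * Complex.I) * (s:ℂ)) := by ring
      _ = (s:ℂ) * Complex.exp ((((2*(α₁+α₂) - φ : ℝ)) : ℂ) * Complex.I) := by
          rw [← this]
  have hre := congrArg Complex.re hkey
  rwa [Complex.exp_ofReal_mul_I_re, Complex.re_ofReal_mul,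
    Complex.exp_ofReal_mul_I_re] at hre


end
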